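/- Let G be a minimally bad graph and O = [v_1,…,v_n] a bad connected order of G. If P = a…b is a flat path in G, then either P is well ordered, or the source v_1 is an internal vertex of P and the subpaths aPv_1 and v_1Pb are both well ordered. In particular, at most one maximal flat path in G is not well ordered. -/

import Mathlib

open Classical in
noncomputable def greedyStep {V : Type*} (G : SimpleGraph V) (f : V → ℕ) (v : V) : V → ℕ :=
  fun u => if u = v then sInf {c : ℕ | 1 ≤ c ∧ ∀ w, G.Adj v w → f w ≠ c} else f u

noncomputable def greedyFrom {V : Type*} (G : SimpleGraph V) (f : V → ℕ) (l : List V) : V → ℕ :=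
  l.foldl (greedyStep G) f

noncomputable def greedy {V : Type*} (G : SimpleGraph V) (l : List V) : V → ℕ :=
  greedyFrom G (fun _ => 0) l

open Classical in
noncomputable def greedyStart2 {V : Type*} (G : SimpleGraph V) : List V → V → ℕ
  | [] => fun _ => 0
  | v :: rest => greedyFrom G (fun u => if u = v then 2 else 0) rest

noncomputable def chi {V : Type*} [Fintype V] (G : SimpleGraph V) : ℕ :=
  sInf {n : ℕ | G.Colorable n}

open Classical in
noncomputable def idx {V : Type*} (l : List V) (v : V) : ℕ := l.idxOf v

noncomputable def maxIdx {V : Type*} (l : List V) (A : Set V) : ℕ := sSup (idx l '' A)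
noncomputable def minIdx {V : Type*} (l : List V) (A : Set V) : ℕ := sInf (idx l '' A)

def IsConnOrder {V : Type*} (G : SimpleGraph V) (l : List V) : Prop :=
  l.Nodup ∧ (∀ v : V, v ∈ l) ∧
    ∀ i : Fin l.length, 0 < i.1 → ∃ j : Fin l.length, j.1 < i.1 ∧ G.Adj (l.get j) (l.get i)

def GoodOrder {V : Type*} [Fintype V] (G : SimpleGraph V) (l : List V) : Prop :=
  ∀ v : V, greedy G l v ≤ chi G

def Good {V : Type*} [Fintype V] (G : SimpleGraph V) : Prop :=
  ∀ s : Finset V, (G.induce (↑s : Set V)).Connected →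
    ∀ l : List ↥(↑s : Set V), IsConnOrder (G.induce (↑s : Set V)) l →
      GoodOrder (G.induce (↑s : Set V)) l

def BadOrder {V : Type*} [Fintype V] (G : SimpleGraph V) (l : List V) : Prop :=
  IsConnOrder G l ∧ ¬ GoodOrder G l

def MinimallyBad {V : Type*} [Fintype V] (G : SimpleGraph V) : Prop :=
  ¬ Good G ∧ ∀ s : Finset V, s ≠ Finset.univ →
    (G.induce (↑s : Set V)).Connected → Good (G.induce (↑s : Set V))

def IsInducedPath {V : Type*} (G : SimpleGraph V) (P : List V) : Prop :=
  P.Nodup ∧ ∀ i j : Fin P.length,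
    G.Adj (P.get i) (P.get j) ↔ (i.1 + 1 = j.1 ∨ j.1 + 1 = i.1)

def IsFlatPath {V : Type*} (G : SimpleGraph V) (P : List V) : Prop :=
  IsInducedPath G P ∧
    ∀ i : Fin P.length, 0 < i.1 → i.1 + 1 < P.length → (G.neighborSet (P.get i)).ncard = 2

def WellOrderedPath {V : Type*} (l P : List V) : Prop :=
  P.Pairwise (fun u v => idx l u < idx l v) ∨ P.Pairwise (fun u v => idx l v < idx l u)

def IsMaxFlatPath {V : Type*} (G : SimpleGraph V) (P : List V) : Prop :=
  IsFlatPath G P ∧ ∀ h : P ≠ [],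
    (G.neighborSet (P.head h)).ncard ≠ 2 ∧ (G.neighborSet (P.getLast h)).ncard ≠ 2

def ClawFree {V : Type*} (G : SimpleGraph V) : Prop :=
  ∀ a b c d : V, G.Adj a b → G.Adj a c → G.Adj a d → b ≠ c → b ≠ d → c ≠ d →
    G.Adj b c ∨ G.Adj b d ∨ G.Adj c d

def IsHole {V : Type*} (G : SimpleGraph V) (C : List V) : Prop :=
  4 ≤ C.length ∧ C.Nodup ∧
    ∀ i j : Fin C.length, G.Adj (C.get i) (C.get j) ↔
      ((i.1 + 1) % C.length = j.1 ∨ (j.1 + 1) % C.length = i.1)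

def GemFree {V : Type*} (G : SimpleGraph V) : Prop :=
  ¬ ∃ a b c d e : V, G.Adj a b ∧ G.Adj b c ∧ G.Adj c d ∧
    ¬ G.Adj a c ∧ ¬ G.Adj a d ∧ ¬ G.Adj b d ∧
    G.Adj e a ∧ G.Adj e b ∧ G.Adj e c ∧ G.Adj e d

-- ===== Section 1: idx lemmas =====
section IdxLemmas
variable {V : Type*}

theorem idx_eq [inst : DecidableEq V] (l : List V) (v : V) :
    idx l v = l.idxOf v := by
  unfold idx
  have h : (fun a b : V => Classical.propDecidable (a = b)) = inst := Subsingleton.elim _ _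
  exact congrArg (fun d : DecidableEq V => @List.idxOf V (@instBEqOfDecidableEq V d) v l) h

theorem idx_lt_length {l : List V} {v : V} (h : v ∈ l) : idx l v < l.length := by
  classical
  rw [idx_eq]
  exact List.idxOf_lt_length_iff.2 h

theorem idx_getElem {l : List V} {v : V} (h : v ∈ l) :
    l[idx l v]'(idx_lt_length h) = v := by
  classical
  simp only [idx_eq]
  exact List.getElem_idxOf (List.idxOf_lt_length_iff.2 h)

theorem idx_of_getElem {l : List V} (hnd : l.Nodup) {i : ℕ} (h : i < l.length) :
    idx l (l[i]'h) = i := by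
  classical
  rw [idx_eq]
  exact List.Nodup.idxOf_getElem hnd i h

theorem idx_inj {l : List V} (_hnd : l.Nodup) {u v : V} (hu : u ∈ l) (hv : v ∈ l)
    (h : idx l u = idx l v) : u = v := by
  have := idx_getElem hu
  rw [← this, ← idx_getElem hv]
  congr 1

theorem idx_ne {l : List V} (hnd : l.Nodup) {u v : V} (hu : u ∈ l) (hv : v ∈ l)
    (h : u ≠ v) : idx l u ≠ idx l v := fun he => h (idx_inj hnd hu hv he)

theorem idx_append_left {xs : List V} (ys : List V) {v : V} (h : v ∈ xs) :
    idx (xs ++ ys) v = idx xs v := by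
  classical
  rw [idx_eq, idx_eq]
  exact List.idxOf_append_of_mem h

theorem idx_append_right {xs : List V} (ys : List V) {v : V} (h : v ∉ xs) :
    idx (xs ++ ys) v = xs.length + idx ys v := by
  classical
  rw [idx_eq, idx_eq]
  exact List.idxOf_append_of_notMem h

theorem idx_cons_self (l : List V) (v : V) : idx (v :: l) v = 0 := by
  classical
  rw [idx_eq]
  exact List.idxOf_cons_self

theorem idx_cons_ne (l : List V) {u v : V} (h : u ≠ v) :
    idx (v :: l) u = idx l u + 1 := by
  classical
  rw [idx_eq, idx_eq]
  exact List.idxOf_cons_ne l (Ne.symm h)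

theorem idx_map {W : Type*} {f : V → W} (hf : Function.Injective f) (l : List V) (v : V) :
    idx (l.map f) (f v) = idx l v := by
  induction l with
  | nil => rfl
  | cons a t ih =>
    by_cases h : v = a
    · subst h; simp [idx_cons_self]
    · rw [List.map_cons, idx_cons_ne _ (fun he => h (hf he)), idx_cons_ne _ h, ih]

theorem idx_pmap {p : V → Prop} (l : List V) (H : ∀ a ∈ l, p a) (v : V) (hv : p v) :
    idx (l.pmap (fun a h => (⟨a, h⟩ : {x // p x})) H) ⟨v, hv⟩ = idx l v := by
  induction l with
  | nil => rfl
  | cons a t ih =>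
    by_cases h : v = a
    · subst h; simp [List.pmap, idx_cons_self]
    · rw [List.pmap, idx_cons_ne _ (by simp [h]), idx_cons_ne _ h, ih]

theorem getElem_zero_of_idx_zero {l : List V} {v : V} (hv : v ∈ l) (h : idx l v = 0) :
    l[0]'(by cases l with | nil => simp at hv | cons a t => simp) = v := by
  have := idx_getElem hv
  simpa [h] using this

end IdxLemmas
-- ===== Section 2: greedy basics =====
section GreedyLemmas
variable {V : Type*} {G : SimpleGraph V}

theorem greedyFrom_append (f : V → ℕ) (xs ys : List V) :
    greedyFrom G f (xs ++ ys) = greedyFrom G (greedyFrom G f xs) ys :=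
  List.foldl_append

theorem greedyFrom_cons (f : V → ℕ) (v : V) (ys : List V) :
    greedyFrom G f (v :: ys) = greedyFrom G (greedyStep G f v) ys := rfl

theorem greedyStep_self (f : V → ℕ) (v : V) :
    greedyStep G f v v = sInf {c : ℕ | 1 ≤ c ∧ ∀ w, G.Adj v w → f w ≠ c} := by
  simp [greedyStep]

theorem greedyStep_ne (f : V → ℕ) {u v : V} (h : u ≠ v) :
    greedyStep G f v u = f u := by
  simp [greedyStep, h]

theorem greedyFrom_of_not_mem {f : V → ℕ} {m : List V} {v : V} (h : v ∉ m) :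
    greedyFrom G f m v = f v := by
  induction m generalizing f with
  | nil => rfl
  | cons a t ih =>
    rw [greedyFrom_cons]
    rw [ih (fun hm => h (List.mem_cons_of_mem _ hm))]
    exact greedyStep_ne f (fun he => h (he ▸ List.mem_cons_self))

theorem stepColor_mem [Fintype V] (f : V → ℕ) (v : V) :
    sInf {c : ℕ | 1 ≤ c ∧ ∀ w, G.Adj v w → f w ≠ c} ∈
      {c : ℕ | 1 ≤ c ∧ ∀ w, G.Adj v w → f w ≠ c} := by
  classical
  apply Nat.sInf_mem
  refine ⟨Finset.univ.sup f + 1, by omega, fun w _ => ?_⟩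
  have : f w ≤ Finset.univ.sup f := Finset.le_sup (Finset.mem_univ w)
  omega

/-- split a list at a member -/
theorem split_at_mem {l : List V} {v : V} (hnd : l.Nodup) (hv : v ∈ l) :
    ∃ xs ys, l = xs ++ v :: ys ∧ v ∉ xs ∧ v ∉ ys ∧ xs.length = idx l v := by
  classical
  obtain ⟨xs, ys, rfl⟩ := List.append_of_mem hv
  have hx : v ∉ xs := by
    intro hvx
    rw [List.nodup_append'] at hnd
    exact hnd.2.2 hvx (List.mem_cons_self)
  have hy : v ∉ ys := by
    have := hnd
    rw [List.nodup_append'] at this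
    have := this.2.1
    rw [List.nodup_cons] at this
    exact this.1
  refine ⟨xs, ys, rfl, hx, hy, ?_⟩
  rw [idx_append_right _ hx, idx_cons_self]
  omega

theorem greedy_eq_sInf {l xs ys : List V} {v : V} (hl : l = xs ++ v :: ys) (hy : v ∉ ys) :
    greedy G l v = sInf {c : ℕ | 1 ≤ c ∧ ∀ w, G.Adj v w →
      greedyFrom G (fun _ => 0) xs w ≠ c} := by
  subst hl
  unfold greedy
  rw [greedyFrom_append, greedyFrom_cons, greedyFrom_of_not_mem hy, greedyStep_self]

/-- value of earlier vertices is unchanged later -/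
theorem greedy_eq_pre {l xs ys : List V} {v u : V} (hl : l = xs ++ v :: ys)
    (hu : u ∉ ys) (huv : u ≠ v) :
    greedy G l u = greedyFrom G (fun _ => 0) xs u := by
  subst hl
  unfold greedy
  rw [greedyFrom_append, greedyFrom_cons, greedyFrom_of_not_mem hu, greedyStep_ne _ huv]

theorem greedy_pos [Fintype V] {l : List V} {v : V} (hnd : l.Nodup) (hv : v ∈ l) :
    1 ≤ greedy G l v := by
  obtain ⟨xs, ys, hl, hx, hy, -⟩ := split_at_mem hnd hv
  rw [greedy_eq_sInf hl hy]
  exact (stepColor_mem _ _).1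

theorem greedy_proper [Fintype V] {l : List V} (hnd : l.Nodup) {u v : V}
    (hadj : G.Adj u v) (hu : u ∈ l) (hv : v ∈ l) (hlt : idx l u < idx l v) :
    greedy G l u ≠ greedy G l v := by
  obtain ⟨xs, ys, hl, hx, hy, hlen⟩ := split_at_mem hnd hv
  have huv : u ≠ v := G.ne_of_adj hadj
  have huxs : u ∈ xs := by
    by_contra huxs
    have : u ∈ v :: ys := by
      have := hu; rw [hl] at this
      rcases List.mem_append.1 this with h | h
      · exact absurd h huxs
      · exact h
    rcases List.mem_cons.1 this with h | h
    · exact huv h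
    · -- u ∈ ys, so idx l u > idx l v
      have h1 : u ∉ xs := huxs
      have : idx l u = xs.length + idx (v :: ys) u := by rw [hl]; exact idx_append_right _ h1
      rw [idx_cons_ne _ huv] at this
      omega
  have huys : u ∉ ys := by
    intro h
    have := hnd
    rw [hl, List.nodup_append'] at this
    exact this.2.2 huxs (List.mem_cons_of_mem _ h)
  have h1 : greedy G l u = greedyFrom G (fun _ => 0) xs u := greedy_eq_pre hl huys huv
  rw [greedy_eq_sInf hl hy]
  intro he
  have hmem := stepColor_mem (G := G) (greedyFrom G (fun _ => 0) xs) v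
  exact hmem.2 u hadj.symm (by rw [← h1]; exact he)

end GreedyLemmas
-- ===== Section 2b: more greedy =====
section Greedy2
variable {V : Type*} {G : SimpleGraph V}

theorem greedy_le_of_pair [Fintype V] {l : List V} {v a b : V} (hnd : l.Nodup)
    (hv : v ∈ l) (hN : G.neighborSet v = {a, b}) : greedy G l v ≤ 3 := by
  obtain ⟨xs, ys, hl, hx, hy, -⟩ := split_at_mem hnd hv
  rw [greedy_eq_sInf hl hy]
  set f := greedyFrom G (fun _ => 0) xs with hf
  by_contra hcon
  push_neg at hcon
  have hnb : ∀ w, G.Adj v w → w = a ∨ w = b := by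
    intro w hw
    have : w ∈ G.neighborSet v := hw
    rw [hN] at this
    simpa using this
  have hwit : ∀ k, 1 ≤ k → k < sInf {c : ℕ | 1 ≤ c ∧ ∀ w, G.Adj v w → f w ≠ c} →
      ∃ w, G.Adj v w ∧ f w = k := by
    intro k hk1 hk2
    by_contra hno
    push_neg at hno
    have : k ∈ {c : ℕ | 1 ≤ c ∧ ∀ w, G.Adj v w → f w ≠ c} :=
      ⟨hk1, fun w hw he => hno w hw he⟩
    exact absurd (Nat.sInf_le this) (by omega)
  obtain ⟨w1, hw1, he1⟩ := hwit 1 (by omega) (by omega)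
  obtain ⟨w2, hw2, he2⟩ := hwit 2 (by omega) (by omega)
  obtain ⟨w3, hw3, he3⟩ := hwit 3 (by omega) (by omega)
  set fa := f a with hfa
  set fb := f b with hfb
  rcases hnb w1 hw1 with rfl | rfl <;> rcases hnb w2 hw2 with h2 | h2 <;>
    rcases hnb w3 hw3 with h3 | h3 <;> subst h2 <;> first
      | omega
      | (subst h3; omega)
      | skip
  all_goals (try subst h3); all_goals omega

theorem greedy_proper' [Fintype V] {l : List V} (hnd : l.Nodup) {u v : V}
    (hadj : G.Adj u v) (hu : u ∈ l) (hv : v ∈ l) :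
    greedy G l u ≠ greedy G l v := by
  have hne := idx_ne hnd hu hv (G.ne_of_adj hadj)
  rcases lt_or_gt_of_ne hne with h | h
  · exact greedy_proper hnd hadj hu hv h
  · exact (greedy_proper hnd hadj.symm hv hu h).symm

end Greedy2

-- ===== Section 3: chi =====
section Chi
variable {V : Type*} {W : Type*}

theorem chi_colorable [Fintype V] (G : SimpleGraph V) : G.Colorable (chi G) := by
  have : chi G ∈ {n : ℕ | G.Colorable n} :=
    Nat.sInf_mem ⟨Fintype.card V, by exact G.colorable_of_fintype⟩
  exact this

theorem chi_le_of_colorable [Fintype V] {G : SimpleGraph V} {n : ℕ}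
    (h : G.Colorable n) : chi G ≤ n := Nat.sInf_le h

theorem colorable_of_hom {A : SimpleGraph V} {B : SimpleGraph W} (f : A →g B) {n : ℕ}
    (h : B.Colorable n) : A.Colorable n := by
  obtain ⟨C⟩ := h
  exact ⟨SimpleGraph.Coloring.mk (fun a => C (f a))
    (fun hadj => C.valid (f.map_adj hadj))⟩

theorem two_le_chi [Fintype V] {G : SimpleGraph V} {u v : V} (h : G.Adj u v) :
    2 ≤ chi G := by
  obtain ⟨C⟩ := chi_colorable G
  have hne : C u ≠ C v := C.valid h
  have h1 : ((C u : Fin (chi G))).1 ≠ (C v).1 := by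
    intro he; exact hne (Fin.ext he)
  have := (C u).2
  have := (C v).2
  omega

theorem chi_induce_le [Fintype V] (G : SimpleGraph V) (s : Set V) [Fintype ↥s] :
    chi (G.induce s) ≤ chi G :=
  chi_le_of_colorable (colorable_of_hom (SimpleGraph.Embedding.induce s).toHom
    (chi_colorable G))

theorem chi_iso [Fintype V] [Fintype W] {A : SimpleGraph V} {B : SimpleGraph W}
    (e : A ≃g B) : chi A = chi B :=
  le_antisymm (chi_le_of_colorable (colorable_of_hom e.toHom (chi_colorable B)))
    (chi_le_of_colorable (colorable_of_hom e.symm.toHom (chi_colorable A)))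

end Chi

-- ===== Section 4: connected orders =====
section ConnOrder
variable {V : Type*} {G : SimpleGraph V}

def ExistsEarlierNbr (G : SimpleGraph V) (l : List V) : Prop :=
  ∀ v ∈ l, 0 < idx l v → ∃ w ∈ l, G.Adj w v ∧ idx l w < idx l v

theorem isConnOrder_iff {l : List V} :
    IsConnOrder G l ↔ l.Nodup ∧ (∀ v, v ∈ l) ∧ ExistsEarlierNbr G l := by
  constructor
  · rintro ⟨hnd, hall, hco⟩
    refine ⟨hnd, hall, fun v hv hpos => ?_⟩
    obtain ⟨j, hj, hadj⟩ := hco ⟨idx l v, idx_lt_length hv⟩ hpos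
    have hj' : (j : ℕ) < idx l v := hj
    refine ⟨l.get j, List.get_mem l j, ?_, ?_⟩
    · have h1 : l.get ⟨idx l v, idx_lt_length hv⟩ = v := by
        simp only [List.get_eq_getElem]; exact idx_getElem hv
      rwa [h1] at hadj
    · have h2 : idx l (l.get j) = j.1 := by
        simp only [List.get_eq_getElem]; exact idx_of_getElem hnd j.2
      omega
  · rintro ⟨hnd, hall, heo⟩
    refine ⟨hnd, hall, fun i hi => ?_⟩
    have hvm : l.get i ∈ l := List.get_mem l i
    have hidx : idx l (l.get i) = i.1 := by
      simp only [List.get_eq_getElem]; exact idx_of_getElem hnd i.2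
    obtain ⟨w, hwm, hadj, hlt⟩ := heo (l.get i) hvm (by omega)
    rw [hidx] at hlt
    refine ⟨⟨idx l w, by have := idx_lt_length hwm; omega⟩, hlt, ?_⟩
    have : l.get ⟨idx l w, idx_lt_length hwm⟩ = w := by
      simp only [List.get_eq_getElem]; exact idx_getElem hwm
    rwa [this]

theorem connected_of_connOrder [Nonempty V] {l : List V} (h : IsConnOrder G l) :
    G.Connected := by
  rw [isConnOrder_iff] at h
  obtain ⟨hnd, hall, heo⟩ := h
  have hne : l ≠ [] := by
    intro he
    obtain ⟨v⟩ := ‹Nonempty V›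
    have := hall v; rw [he] at this; simp at this
  have hlen : 0 < l.length := List.length_pos_iff.2 hne
  have key : ∀ n, ∀ v ∈ l, idx l v ≤ n → G.Reachable (l[0]'hlen) v := by
    intro n
    induction n with
    | zero =>
      intro v hv h0
      have : idx l v = 0 := by omega
      rw [← getElem_zero_of_idx_zero hv this]
    | succ n ih =>
      intro v hv hle
      by_cases h0 : idx l v = 0
      · rw [← getElem_zero_of_idx_zero hv h0]
      · obtain ⟨w, hwm, hadj, hlt⟩ := heo v hv (by omega)
        exact (ih w hwm (by omega)).trans hadj.reachable
  constructor
  intro u v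
  exact ((key _ u (hall u) le_rfl).symm).trans (key _ v (hall v) le_rfl)

end ConnOrder
-- ===== Section 5: iso transport =====
section IsoTransport
variable {V W : Type*} {A : SimpleGraph V} {B : SimpleGraph W}

theorem greedyStep_iso (e : A ≃g B) (f : W → ℕ) (a : V) :
    (fun x => greedyStep B f (e a) (e x)) = greedyStep A (fun x => f (e x)) a := by
  funext x
  by_cases hx : x = a
  · subst hx
    rw [greedyStep_self, greedyStep_self]
    congr 1
    ext c
    simp only [Set.mem_setOf_eq]
    constructor
    · rintro ⟨h1, h2⟩
      exact ⟨h1, fun w hw => h2 (e w) (e.map_rel_iff.2 hw)⟩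
    · rintro ⟨h1, h2⟩
      refine ⟨h1, fun w hw => ?_⟩
      have : A.Adj x (e.symm w) := by
        rw [← e.map_rel_iff]
        simpa using hw
      have := h2 _ this
      simpa using this
  · rw [greedyStep_ne _ (fun h => hx (e.injective h)), greedyStep_ne _ hx]

theorem greedyFrom_iso (e : A ≃g B) (m : List V) :
    ∀ (f : W → ℕ) (v : V),
      greedyFrom A (fun x => f (e x)) m v = greedyFrom B f (m.map ⇑e) (e v) := by
  induction m with
  | nil => intro f v; rfl
  | cons a t ih =>
    intro f v
    rw [List.map_cons, greedyFrom_cons, greedyFrom_cons, ← greedyStep_iso e f a]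
    exact ih (greedyStep B f (e a)) v

theorem greedy_iso (e : A ≃g B) (m : List V) (v : V) :
    greedy A m v = greedy B (m.map ⇑e) (e v) :=
  greedyFrom_iso e m (fun _ => 0) v

theorem connOrder_map (e : A ≃g B) {m : List V} (hco : IsConnOrder A m) :
    IsConnOrder B (m.map ⇑e) := by
  rw [isConnOrder_iff] at hco ⊢
  obtain ⟨hnd, hall, heo⟩ := hco
  refine ⟨hnd.map e.injective, fun v => ?_, ?_⟩
  · have : v = e (e.symm v) := by simp
    rw [this]
    exact List.mem_map_of_mem (hall _)
  · intro v hv hpos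
    obtain ⟨u, hu, rfl⟩ := List.mem_map.1 hv
    rw [idx_map e.injective] at hpos
    obtain ⟨w, hwm, hadj, hlt⟩ := heo u hu hpos
    refine ⟨e w, List.mem_map_of_mem hwm, e.map_rel_iff.2 hadj, ?_⟩
    rw [idx_map e.injective, idx_map e.injective]
    exact hlt

theorem connected_iso (e : A ≃g B) (h : A.Connected) : B.Connected :=
  h.map e.toHom e.surjective

/-- iso between `K.induce ↑(univ : Finset W)` and `K` -/
noncomputable def univIso {W : Type*} [Fintype W] (K : SimpleGraph W) :
    K.induce (↑(Finset.univ : Finset W) : Set W) ≃g K where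
  toEquiv := Equiv.subtypeUnivEquiv (fun x => Finset.mem_coe.2 (Finset.mem_univ x))
  map_rel_iff' := Iff.rfl

theorem good_self {W : Type*} [Fintype W] {K : SimpleGraph W} (hg : Good K)
    (hc : K.Connected) {m : List W} (hco : IsConnOrder K m) :
    ∀ v, greedy K m v ≤ chi K := by
  classical
  intro v
  set e := univIso K with he
  have hgu := hg Finset.univ (connected_iso e.symm hc)
    (m.map ⇑e.symm) (connOrder_map e.symm hco)
  have h1 := hgu (e.symm v)
  rw [← greedy_iso e.symm m v] at h1
  calc greedy K m v ≤ chi (K.induce (↑(Finset.univ : Finset W) : Set W)) := h1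
    _ = chi K := chi_iso e

end IsoTransport
-- ===== Section 6: deletion =====
section Deletion
variable {V : Type*} {G : SimpleGraph V}

theorem greedyFrom_congr_off {p : V} {m : List V} (hp : p ∉ m)
    (hnadj : ∀ w ∈ m, ¬ G.Adj p w) :
    ∀ f g : V → ℕ, (∀ u, u ≠ p → f u = g u) → ∀ u, u ≠ p →
      greedyFrom G f m u = greedyFrom G g m u := by
  induction m with
  | nil => intro f g hfg u hu; exact hfg u hu
  | cons a t ih =>
    intro f g hfg u hu
    have ha : a ≠ p := fun he => hp (he ▸ List.mem_cons_self)
    rw [greedyFrom_cons, greedyFrom_cons]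
    refine ih (fun h => hp (List.mem_cons_of_mem _ h))
      (fun w hw => hnadj w (List.mem_cons_of_mem _ hw)) _ _ ?_ u hu
    intro x hx
    by_cases hxa : x = a
    · subst hxa
      rw [greedyStep_self, greedyStep_self]
      congr 1
      ext c
      simp only [Set.mem_setOf_eq]
      have hstep : ∀ w, G.Adj x w → f w = g w := by
        intro w hw
        refine hfg w (fun he => ?_)
        subst he
        exact hnadj x (List.mem_cons_self) hw.symm
      constructor
      · rintro ⟨h1, h2⟩; exact ⟨h1, fun w hw => (hstep w hw) ▸ h2 w hw⟩
      · rintro ⟨h1, h2⟩; exact ⟨h1, fun w hw => (hstep w hw) ▸ h2 w hw⟩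
    · rw [greedyStep_ne _ hxa, greedyStep_ne _ hxa]
      exact hfg x hx

theorem greedy_del {l xs ys : List V} {p : V} (hl : l = xs ++ p :: ys)
    (hpy : p ∉ ys) (hnadjy : ∀ w ∈ ys, ¬ G.Adj p w) :
    ∀ u, u ≠ p → greedy G l u = greedy G (xs ++ ys) u := by
  intro u hu
  subst hl
  unfold greedy
  rw [greedyFrom_append, greedyFrom_append, greedyFrom_cons]
  exact greedyFrom_congr_off hpy hnadjy _ _
    (fun x hx => greedyStep_ne _ hx) u hu

theorem greedyFrom_induce {S : Set V} {p : V} (hS : ∀ x, x ∈ S ↔ x ≠ p) :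
    ∀ (m : List V) (hm : ∀ a ∈ m, a ∈ S) (f : V → ℕ), f p = 0 →
      ∀ (u : V) (hu : u ∈ S),
      greedyFrom (G.induce S) (fun x => f ↑x)
        (m.pmap (fun a h => (⟨a, h⟩ : ↥S)) hm) ⟨u, hu⟩ = greedyFrom G f m u := by
  intro m
  induction m with
  | nil => intro hm f hf u hu; rfl
  | cons a t ih =>
    intro hm f hf u hu
    have haS : a ∈ S := hm a (List.mem_cons_self)
    have hap : a ≠ p := (hS a).1 haS
    rw [List.pmap, greedyFrom_cons, greedyFrom_cons]
    have hfun : greedyStep (G.induce S) (fun x => f ↑x) ⟨a, haS⟩ =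
        fun x : ↥S => greedyStep G f a ↑x := by
      funext x
      by_cases hx : x = (⟨a, haS⟩ : ↥S)
      · subst hx
        rw [greedyStep_self, greedyStep_self]
        congr 1
        ext c
        simp only [Set.mem_setOf_eq]
        constructor
        · rintro ⟨h1, h2⟩
          refine ⟨h1, fun w hw => ?_⟩
          by_cases hwp : w = p
          · subst hwp; rw [hf]; omega
          · exact h2 ⟨w, (hS w).2 hwp⟩ (by simpa [SimpleGraph.comap_adj] using hw)
        · rintro ⟨h1, h2⟩
          refine ⟨h1, fun w hw => ?_⟩
          exact h2 ↑w (by simpa [SimpleGraph.comap_adj] using hw)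
      · have hvx : (↑x : V) ≠ a := fun he => hx (Subtype.ext he)
        rw [greedyStep_ne _ hx, greedyStep_ne _ hvx]
    rw [hfun]
    have hfp : greedyStep G f a p = 0 := by
      rw [greedyStep_ne _ (Ne.symm hap)]; exact hf
    exact ih _ (greedyStep G f a) hfp u hu

theorem greedy_induce {S : Set V} {p : V} (hS : ∀ x, x ∈ S ↔ x ≠ p)
    (m : List V) (hm : ∀ a ∈ m, a ∈ S) (u : V) (hu : u ∈ S) :
    greedy (G.induce S) (m.pmap (fun a h => (⟨a, h⟩ : ↥S)) hm) ⟨u, hu⟩ =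
      greedy G m u :=
  greedyFrom_induce hS m hm (fun _ => 0) rfl u hu

theorem idx_middle_lt {xs ys : List V} {p : V} (hnd : (xs ++ p :: ys).Nodup)
    {u v : V} (hu : u ∈ xs ++ ys) (hv : v ∈ xs ++ ys)
    (h : idx (xs ++ p :: ys) u < idx (xs ++ p :: ys) v) :
    idx (xs ++ ys) u < idx (xs ++ ys) v := by
  have hdisj : ∀ w ∈ ys, w ∉ xs := by
    intro w hw hwx
    rw [List.nodup_append'] at hnd
    exact hnd.2.2 hwx (List.mem_cons_of_mem _ hw)
  have hpx : p ∉ xs := by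
    rw [List.nodup_append'] at hnd
    exact fun hc => hnd.2.2 hc (List.mem_cons_self)
  have hpy : p ∉ ys := by
    rw [List.nodup_append', List.nodup_cons] at hnd
    exact hnd.2.1.1
  have key : ∀ w ∈ xs ++ ys, (w ∈ xs ∧ idx (xs ++ p :: ys) w = idx (xs ++ ys) w ∧
      idx (xs ++ ys) w < xs.length) ∨
      (w ∈ ys ∧ idx (xs ++ p :: ys) w = xs.length + 1 + idx ys w ∧
        idx (xs ++ ys) w = xs.length + idx ys w) := by
    intro w hw
    rcases List.mem_append.1 hw with hwx | hwy
    · left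
      refine ⟨hwx, ?_, ?_⟩
      · rw [idx_append_left _ hwx, idx_append_left _ hwx]
      · rw [idx_append_left _ hwx]; exact idx_lt_length hwx
    · right
      have hwnx : w ∉ xs := hdisj w hwy
      have hwp : w ≠ p := fun he => hpy (he ▸ hwy)
      refine ⟨hwy, ?_, ?_⟩
      · rw [idx_append_right _ hwnx, idx_cons_ne _ hwp]; omega
      · rw [idx_append_right _ hwnx]
  rcases key u hu with ⟨hu1, hu2, hu3⟩ | ⟨hu1, hu2, hu3⟩ <;>
    rcases key v hv with ⟨hv1, hv2, hv3⟩ | ⟨hv1, hv2, hv3⟩ <;> omega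

theorem idx_middle_pos {xs ys : List V} {p : V} (hnd : (xs ++ p :: ys).Nodup)
    {u : V} (hu : u ∈ xs ++ ys) (hpos : 0 < idx (xs ++ ys) u) :
    0 < idx (xs ++ p :: ys) u := by
  by_contra hc
  push_neg at hc
  have h0 : idx (xs ++ p :: ys) u = 0 := by omega
  have hul : u ∈ xs ++ p :: ys := by
    rcases List.mem_append.1 hu with h | h
    · exact List.mem_append.2 (Or.inl h)
    · exact List.mem_append.2 (Or.inr (List.mem_cons_of_mem _ h))
  cases xs with
  | nil =>
    rw [List.nil_append, List.nodup_cons] at hnd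
    have hup : u = p := by
      have := getElem_zero_of_idx_zero hul h0
      simpa using this.symm
    subst hup
    exact hnd.1 (by simpa using hu)
  | cons x xts =>
    have hux : x = u := by
      have := getElem_zero_of_idx_zero hul h0
      simpa using this
    have h1 : idx ((x :: xts) ++ ys) x = 0 := by
      rw [List.cons_append, idx_cons_self]
    rw [← hux] at hpos
    omega

end Deletion
-- ===== Section 7: no local max =====
section NoLocalMax
variable {V : Type*}

theorem neighborSet_pair [Fintype V] {G : SimpleGraph V} {x a b : V}
    (h2 : (G.neighborSet x).ncard = 2) (ha : G.Adj x a) (hb : G.Adj x b)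
    (hab : a ≠ b) : G.neighborSet x = {a, b} := by
  have hsub : ({a, b} : Set V) ⊆ G.neighborSet x := by
    intro w hw
    rcases hw with rfl | hw
    · exact ha
    · rw [Set.mem_singleton_iff] at hw; subst hw; exact hb
  exact (Set.eq_of_subset_of_ncard_le hsub
    (by rw [h2, Set.ncard_pair hab]) (Set.toFinite _)).symm

theorem no_local_max [Fintype V] {G : SimpleGraph V} {l : List V}
    (hmin : MinimallyBad G) (hbad : BadOrder G l) {p a b : V}
    (hN : G.neighborSet p = {a, b}) (hab : a ≠ b)
    (hia : idx l a < idx l p) (hib : idx l b < idx l p) : False := by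
  classical
  obtain ⟨hco, hngood⟩ := hbad
  obtain ⟨hnd, hall, heo⟩ := isConnOrder_iff.1 hco
  have hadj_pa : G.Adj p a := by
    have : a ∈ G.neighborSet p := by rw [hN]; exact Set.mem_insert _ _
    exact this
  have hadj_pb : G.Adj p b := by
    have : b ∈ G.neighborSet p := by rw [hN]; simp
    exact this
  have hnb : ∀ w, G.Adj p w → w = a ∨ w = b := by
    intro w hw
    have : w ∈ G.neighborSet p := hw
    rw [hN] at this; simpa using this
  have hap : a ≠ p := (G.ne_of_adj hadj_pa).symm
  have hbp : b ≠ p := (G.ne_of_adj hadj_pb).symm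
  have hpl : p ∈ l := hall p
  obtain ⟨xs, ys, hl, hpx, hpy, hlen⟩ := split_at_mem hnd hpl
  have hnd' : (xs ++ p :: ys).Nodup := hl ▸ hnd
  have hdisj : ∀ w ∈ ys, w ∉ xs := by
    intro w hw hwx
    rw [List.nodup_append'] at hnd'
    exact hnd'.2.2 hwx (List.mem_cons_of_mem _ hw)
  have hmem_ys_idx : ∀ w ∈ ys, idx l p < idx l w := by
    intro w hw
    have hwp : w ≠ p := fun he => hpy (he ▸ hw)
    have hwx : w ∉ xs := hdisj w hw
    rw [hl, idx_append_right _ hpx, idx_cons_self, idx_append_right _ hwx,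
      idx_cons_ne _ hwp]
    omega
  have hnadjy : ∀ w ∈ ys, ¬ G.Adj p w := by
    intro w hw hadj
    have := hmem_ys_idx w hw
    rcases hnb w hadj with rfl | rfl <;> omega
  -- a, b are in xs
  have hmem_xs : ∀ w, w ∈ l → idx l w < idx l p → w ∈ xs := by
    intro w hwl hwlt
    rw [hl] at hwl
    rcases List.mem_append.1 hwl with h | h
    · exact h
    · rcases List.mem_cons.1 h with rfl | h
      · omega
      · have := hmem_ys_idx w h; omega
  have haxs : a ∈ xs := hmem_xs a (hall a) hia
  have hbxs : b ∈ xs := hmem_xs b (hall b) hib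
  have hays : a ∉ ys := fun h => hdisj a h haxs
  have hbys : b ∉ ys := fun h => hdisj b h hbxs
  -- the induced subgraph
  set s : Finset V := Finset.univ.erase p with hs
  have hS : ∀ x, x ∈ (↑s : Set V) ↔ x ≠ p := by intro x; simp [hs]
  have hmS : ∀ x ∈ xs ++ ys, x ∈ (↑s : Set V) := by
    intro x hx
    refine (hS x).2 (fun he => ?_)
    subst he
    rcases List.mem_append.1 hx with h | h
    · exact hpx h
    · exact hpy h
  set S : Set V := (↑s : Set V) with hSdef
  set l'' := (xs ++ ys).pmap (fun a h => (⟨a, h⟩ : ↥S)) hmS with hl''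
  have hnd2 : (xs ++ ys).Nodup := by
    refine List.Nodup.sublist ?_ hnd'
    exact List.Sublist.append_left (List.sublist_cons_self p ys) xs
  have hmem2 : ∀ u, u ≠ p → u ∈ l → u ∈ xs ++ ys := by
    intro u hu hul
    rw [hl] at hul
    rcases List.mem_append.1 hul with h | h
    · exact List.mem_append.2 (Or.inl h)
    · rcases List.mem_cons.1 h with rfl | h
      · exact absurd rfl hu
      · exact List.mem_append.2 (Or.inr h)
  have hco'' : IsConnOrder (G.induce S) l'' := by
    rw [isConnOrder_iff]
    refine ⟨?_, ?_, ?_⟩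
    · exact List.Nodup.pmap (fun a ha b hb he => congrArg Subtype.val he) hnd2
    · intro u
      have hup : (u : V) ≠ p := (hS _).1 u.2
      have hum : (u : V) ∈ xs ++ ys := hmem2 _ hup (hall _)
      rw [hl'', List.mem_pmap]
      exact ⟨↑u, hum, rfl⟩
    · intro v hv hpos
      rw [hl''] at hv
      obtain ⟨v0, hv0m, rfl⟩ := List.mem_pmap.1 hv
      rw [hl'', idx_pmap] at hpos
      have hposl : 0 < idx l v0 := by
        rw [hl]; exact idx_middle_pos hnd' hv0m hpos
      obtain ⟨w, hwm, hadj, hlt⟩ := heo v0 (by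
        rw [hl]
        rcases List.mem_append.1 hv0m with h | h
        · exact List.mem_append.2 (Or.inl h)
        · exact List.mem_append.2 (Or.inr (List.mem_cons_of_mem _ h))) hposl
      have hv0p : v0 ≠ p := (hS _).1 (hmS v0 hv0m)
      have hwp : w ≠ p := by
        rintro rfl
        rcases hnb v0 hadj with rfl | rfl
        · omega
        · omega
      have hwm2 : w ∈ xs ++ ys := hmem2 w hwp hwm
      refine ⟨⟨w, (hS w).2 hwp⟩, ?_, ?_, ?_⟩
      · rw [hl'', List.mem_pmap]; exact ⟨w, hwm2, rfl⟩
      · simpa [SimpleGraph.comap_adj] using hadj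
      · rw [hl'', idx_pmap, idx_pmap]
        refine idx_middle_lt hnd' hwm2 hv0m ?_
        rw [hl] at hlt
        exact hlt
  have hnev : Nonempty ↥S := ⟨⟨a, (hS a).2 hap⟩⟩
  have hconn : (G.induce S).Connected := connected_of_connOrder hco''
  have hsne : s ≠ Finset.univ := by
    intro he
    have h1 : p ∈ s := by rw [he]; exact Finset.mem_univ p
    exact Finset.notMem_erase p Finset.univ h1
  have hgood : Good (G.induce S) := hmin.2 s hsne hconn
  have hbound := good_self hgood hconn hco''
  have hbridge : ∀ u, u ≠ p → greedy G l u ≤ chi G := by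
    intro u hu
    have huS : u ∈ S := (hS u).2 hu
    have h1 : greedy G l u = greedy G (xs ++ ys) u := greedy_del hl hpy hnadjy u hu
    have h2 : greedy (G.induce S) l'' ⟨u, huS⟩ = greedy G (xs ++ ys) u :=
      greedy_induce (fun x => hS x) (xs ++ ys) hmS u huS
    have h3 := hbound ⟨u, huS⟩
    have h4 : chi (G.induce S) ≤ chi G := chi_induce_le G S
    omega
  have hzex : ∃ z, chi G < greedy G l z := by
    by_contra hcon
    push_neg at hcon
    exact hngood (fun v => hcon v)
  obtain ⟨z, hz⟩ := hzex
  have hzp : z = p := by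
    by_contra h
    have := hbridge z h
    omega
  rw [hzp] at hz
  clear hzp
  have h3 : greedy G l p ≤ 3 := greedy_le_of_pair hnd hpl hN
  have h2chi : 2 ≤ chi G := two_le_chi hadj_pa
  have hchi2 : chi G = 2 := by omega
  have hgp3 : greedy G l p = 3 := by omega
  -- final greedy colors of a and b
  have hfa : greedyFrom G (fun _ => 0) xs a = greedy G l a := (greedy_eq_pre hl hays hap).symm
  have hfb : greedyFrom G (fun _ => 0) xs b = greedy G l b := (greedy_eq_pre hl hbys hbp).symm
  have hsinf := greedy_eq_sInf (G := G) hl hpy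
  have hget : ∀ k, 1 ≤ k → k < 3 → ∃ w, G.Adj p w ∧ greedyFrom G (fun _ => 0) xs w = k := by
    intro k hk1 hk3
    by_contra hno
    push_neg at hno
    have hmem : k ∈ {c : ℕ | 1 ≤ c ∧ ∀ w, G.Adj p w → greedyFrom G (fun _ => 0) xs w ≠ c} :=
      ⟨hk1, fun w hw he => hno w hw he⟩
    have := Nat.sInf_le hmem
    rw [← hsinf] at this
    omega
  obtain ⟨w1, hw1, he1⟩ := hget 1 (by omega) (by omega)
  obtain ⟨w2, hw2, he2⟩ := hget 2 (by omega) (by omega)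
  have hbnd_a1 : 1 ≤ greedy G l a := greedy_pos hnd (hall a)
  have hbnd_b1 : 1 ≤ greedy G l b := greedy_pos hnd (hall b)
  have hbnd_a2 : greedy G l a ≤ 2 := by have := hbridge a hap; omega
  have hbnd_b2 : greedy G l b ≤ 2 := by have := hbridge b hbp; omega
  have hone : greedy G l a = 1 ∨ greedy G l b = 1 := by
    rcases hnb w1 hw1 with rfl | rfl
    · left; rw [← hfa]; exact he1
    · right; rw [← hfb]; exact he1
  have htwo : greedy G l a = 2 ∨ greedy G l b = 2 := by
    rcases hnb w2 hw2 with rfl | rfl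
    · left; rw [← hfa]; exact he2
    · right; rw [← hfb]; exact he2
  have hne_ab : greedy G l a ≠ greedy G l b := by omega
  -- optimal 2-coloring
  have hcol : G.Colorable 2 := by rw [← hchi2]; exact chi_colorable G
  obtain ⟨C⟩ := hcol
  set c2 : V → ℕ := fun v => (C v).1 + 1 with hc2def
  have hc2bnd : ∀ v, 1 ≤ c2 v ∧ c2 v ≤ 2 := by
    intro v
    have := (C v).2
    constructor <;> simp only [hc2def] <;> omega
  have hc2ne : ∀ u v, G.Adj u v → c2 u ≠ c2 v := by
    intro u v huv he
    refine C.valid huv (Fin.ext ?_)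
    simp only [hc2def] at he
    omega
  have hstep : ∀ x y : ↥S, (G.induce S).Adj x y →
      (greedy G l ↑x = c2 ↑x ↔ greedy G l ↑y = c2 ↑y) := by
    intro x y hxy
    have hadjG : G.Adj ↑x ↑y := by simpa [SimpleGraph.comap_adj] using hxy
    have hxp : (x : V) ≠ p := (hS _).1 x.2
    have hyp : (y : V) ≠ p := (hS _).1 y.2
    have h1 : 1 ≤ greedy G l ↑x := greedy_pos hnd (hall _)
    have h2 : 1 ≤ greedy G l ↑y := greedy_pos hnd (hall _)
    have h3 : greedy G l ↑x ≤ 2 := by have := hbridge ↑x hxp; omega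
    have h4 : greedy G l ↑y ≤ 2 := by have := hbridge ↑y hyp; omega
    have h5 : greedy G l ↑x ≠ greedy G l ↑y := greedy_proper' hnd hadjG (hall _) (hall _)
    have h6 := hc2bnd ↑x
    have h7 := hc2bnd ↑y
    have h8 := hc2ne ↑x ↑y hadjG
    constructor <;> intro <;> omega
  have hreach : ∀ x y : ↥S, (G.induce S).Reachable x y →
      (greedy G l ↑x = c2 ↑x ↔ greedy G l ↑y = c2 ↑y) := by
    intro x y hxy
    obtain ⟨w⟩ := hxy
    induction w with
    | nil => exact Iff.rfl
    | cons h w ih => exact (hstep _ _ h).trans ih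
  have hiff := hreach ⟨a, (hS a).2 hap⟩ ⟨b, (hS b).2 hbp⟩
    (hconn.preconnected _ _)
  have hCab : c2 a = c2 b := by
    have h1 := C.valid hadj_pa
    have h2 := C.valid hadj_pb
    have h3 : (C a).1 ≠ (C p).1 ∨ C a = C p := by
      by_cases h : (C a).1 = (C p).1
      · right; exact Fin.ext h
      · left; exact h
    have ha' : (C a).1 ≠ (C p).1 := by
      intro he; exact h1.symm (Fin.ext he)
    have hb' : (C b).1 ≠ (C p).1 := by
      intro he; exact h2.symm (Fin.ext he)
    have l1 := (C a).2
    have l2 := (C b).2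
    have l3 := (C p).2
    simp only [hc2def]
    omega
  simp only at hiff
  by_cases hca : greedy G l a = c2 a
  · have hcb := hiff.1 hca
    omega
  · have hcb : ¬ greedy G l b = c2 b := fun h => hca (hiff.2 h)
    have h6 := hc2bnd a
    have h7 := hc2bnd b
    omega

end NoLocalMax
-- ===== Section 8: Part A =====
section PartA
variable {V : Type*}

theorem step_mono {f : ℕ → ℕ} {n : ℕ} (h : ∀ i, i + 1 < n → f i < f (i + 1)) :
    ∀ i j, j < n → i < j → f i < f j := by
  intro i j hj hij
  induction j with
  | zero => omega
  | succ k ih =>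
    rcases Nat.lt_or_ge i k with hik | hik
    · exact (ih (by omega) hik).trans (h k hj)
    · have : i = k := by omega
      subst this
      exact h i hj

theorem step_anti {f : ℕ → ℕ} {n : ℕ} (h : ∀ i, i + 1 < n → f (i + 1) < f i) :
    ∀ i j, j < n → i < j → f j < f i := by
  intro i j hj hij
  induction j with
  | zero => omega
  | succ k ih =>
    rcases Nat.lt_or_ge i k with hik | hik
    · exact (h k hj).trans (ih (by omega) hik)
    · have : i = k := by omega
      subst this
      exact h i hj

theorem partA [Fintype V] {G : SimpleGraph V} {l : List V}
    (hmin : MinimallyBad G) (hbad : BadOrder G l) {v1 : V}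
    (hv1 : l.head? = some v1) (P : List V) (hP : IsFlatPath G P) :
    WellOrderedPath l P ∨
      ∃ m, 0 < m ∧ m + 1 < P.length ∧ P[m]? = some v1 ∧
        WellOrderedPath l (P.take (m + 1)) ∧ WellOrderedPath l (P.drop m) := by
  classical
  obtain ⟨hco, hngood⟩ := hbad
  obtain ⟨hnd, hall, heo⟩ := isConnOrder_iff.1 hco
  obtain ⟨t0, hl0⟩ := List.head?_eq_some_iff.1 hv1
  have hlne : l ≠ [] := by rw [hl0]; simp
  have hlpos : 0 < l.length := List.length_pos_iff.2 hlne
  have hidxv1 : idx l v1 = 0 := by rw [hl0]; exact idx_cons_self _ _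
  have hv1char : ∀ v ∈ l, idx l v = 0 → v = v1 := by
    intro v hv h0
    have h1 := getElem_zero_of_idx_zero hv h0
    have h2 : l[0]'hlpos = v1 := by simp [hl0]
    exact h1.symm.trans h2
  have hPnd : P.Nodup := hP.1.1
  have hstepadj : ∀ i (h : i + 1 < P.length), G.Adj (P[i]'(by omega)) (P[i+1]'h) := by
    intro i h
    refine (hP.1.2 ⟨i, by omega⟩ ⟨i + 1, h⟩).2 (Or.inl rfl)
  have hdeg : ∀ i (h1 : 0 < i) (h2 : i + 1 < P.length),
      (G.neighborSet (P[i]'(by omega))).ncard = 2 := by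
    intro i h1 h2
    exact hP.2 ⟨i, by omega⟩ h1 h2
  -- index sequence
  set a : ℕ → ℕ := fun i => idx l (P.getD i v1) with ha
  have haeq : ∀ i (h : i < P.length), a i = idx l (P[i]'h) := by
    intro i h
    simp only [ha]
    rw [List.getD_eq_getElem _ _ h]
  have hFD : ∀ i j (hi : i < P.length) (hj : j < P.length), i ≠ j → a i ≠ a j := by
    intro i j hi hj hij
    rw [haeq i hi, haeq j hj]
    refine idx_ne hnd (hall _) (hall _) ?_
    rw [ne_eq, List.Nodup.getElem_inj_iff hPnd]
    exact hij
  -- no local max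
  have hFMAX : ∀ i, i + 2 < P.length → a i < a (i + 1) → a (i + 2) < a (i + 1) → False := by
    intro i h hup hdn
    have hpair : G.neighborSet (P[i+1]'(by omega)) = {P[i]'(by omega), P[i+2]'(by omega)} := by
      refine neighborSet_pair (hdeg (i+1) (by omega) (by omega)) ?_ ?_ ?_
      · exact (hstepadj i (by omega)).symm
      · have := hstepadj (i+1) (by omega)
        convert this using 2
      · rw [ne_eq, List.Nodup.getElem_inj_iff hPnd]; omega
    refine no_local_max hmin ⟨hco, hngood⟩ hpair ?_ ?_ ?_
    · rw [ne_eq, List.Nodup.getElem_inj_iff hPnd]; omega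
    · rw [← haeq i (by omega), ← haeq (i+1) (by omega)]; exact hup
    · rw [← haeq (i+2) (by omega), ← haeq (i+1) (by omega)]; exact hdn
  -- local min is v1
  have hFMIN : ∀ i (h : i + 2 < P.length), a (i + 1) < a i → a (i + 1) < a (i + 2) →
      P[i+1]'(by omega) = v1 := by
    intro i h hdn hup
    by_contra hne
    have hpos : 0 < a (i + 1) := by
      rcases Nat.eq_zero_or_pos (a (i+1)) with h0 | h0
      · rw [haeq (i+1) (by omega)] at h0
        exact absurd (hv1char _ (hall _) h0) hne
      · exact h0
    rw [haeq (i+1) (by omega)] at hpos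
    obtain ⟨w, hwm, hadj, hlt⟩ := heo _ (hall (P[i+1]'(by omega))) hpos
    have hpair : G.neighborSet (P[i+1]'(by omega)) = {P[i]'(by omega), P[i+2]'(by omega)} := by
      refine neighborSet_pair (hdeg (i+1) (by omega) (by omega)) ?_ ?_ ?_
      · exact (hstepadj i (by omega)).symm
      · have := hstepadj (i+1) (by omega)
        convert this using 2
      · rw [ne_eq, List.Nodup.getElem_inj_iff hPnd]; omega
    have hwnb : w ∈ G.neighborSet (P[i+1]'(by omega)) := hadj.symm
    rw [hpair] at hwnb
    rw [← haeq (i+1) (by omega)] at hlt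
    rcases hwnb with h | hwnb
    · rw [h, ← haeq i (by omega)] at hlt; omega
    · rw [Set.mem_singleton_iff] at hwnb
      rw [hwnb, ← haeq (i+2) (by omega)] at hlt; omega
  -- trivial cases
  by_cases hsmall : P.length ≤ 1
  · left; left
    rw [List.pairwise_iff_getElem]
    intro i j hi hj hij
    exfalso
    have hj2 : j < P.length := hj
    omega
  push_neg at hsmall
  by_cases hn2 : P.length = 2
  · left
    have h01 : a 0 ≠ a 1 := hFD 0 1 (by omega) (by omega) (by omega)
    rcases Nat.lt_or_ge (a 0) (a 1) with h | h
    · left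
      rw [List.pairwise_iff_getElem]
      intro i j hi hj hij
      have hi0 : i = 0 := by omega
      have hj1 : j = 1 := by omega
      subst hi0; subst hj1
      rw [← haeq 0 (by omega), ← haeq 1 (by omega)]
      exact h
    · right
      rw [List.pairwise_iff_getElem]
      intro i j hi hj hij
      have hi0 : i = 0 := by omega
      have hj1 : j = 1 := by omega
      subst hi0; subst hj1
      rw [← haeq 0 (by omega), ← haeq 1 (by omega)]
      omega
  have hn3 : 3 ≤ P.length := by omega
  -- up-propagation
  have hprop : ∀ i, i + 2 < P.length → a i < a (i + 1) → a (i + 1) < a (i + 2) := by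
    intro i h hup
    have := hFD (i+1) (i+2) (by omega) (by omega) (by omega)
    rcases Nat.lt_or_ge (a (i+1)) (a (i+2)) with h' | h'
    · exact h'
    · exact absurd (hFMAX i h hup (by omega)) (fun x => x)
  have hproprec : ∀ i j, i + 1 < P.length → j + 1 < P.length → i ≤ j → a i < a (i + 1) → a j < a (j + 1) := by
    intro i j hi hj hij hup
    induction j with
    | zero =>
      have : i = 0 := by omega
      subst this; exact hup
    | succ k ih =>
      rcases Nat.lt_or_ge i (k+1) with h | h
      · have hk := ih (by omega) (by omega)
        exact hprop k (by omega) hk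
      · have : i = k + 1 := by omega
        subst this; exact hup
  by_cases hex : ∃ i, i + 1 < P.length ∧ a i < a (i + 1)
  · set m := Nat.find hex with hm
    obtain ⟨hm1, hm2⟩ : m + 1 < P.length ∧ a m < a (m + 1) := Nat.find_spec hex
    have hleast : ∀ k, k < m → ¬ (k + 1 < P.length ∧ a k < a (k + 1)) := fun k hk =>
      Nat.find_min hex hk
    have hup_after : ∀ j, m ≤ j → j + 1 < P.length → a j < a (j + 1) := by
      intro j hmj hj
      exact hproprec m j hm1 hj hmj hm2
    have hdn_before : ∀ k, k < m → a (k + 1) < a k := by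
      intro k hk
      have hk1 : k + 1 < P.length := by omega
      have h1 := hleast k hk
      push_neg at h1
      have h2 := h1 hk1
      have hne := hFD k (k+1) (by omega) (by omega) (by omega)
      omega
    by_cases hm0 : m = 0
    · -- all increasing
      left; left
      rw [List.pairwise_iff_getElem]
      intro i j hi hj hij
      rw [← haeq i hi, ← haeq j hj]
      exact step_mono (f := a) (n := P.length) (fun k hk => hup_after k (by omega) hk) i j hj hij
    · -- switch point
      right
      have hm0' : 0 < m := by omega
      refine ⟨m, hm0', hm1, ?_, ?_, ?_⟩
      · rw [List.getElem?_eq_getElem (show m < P.length from by omega)]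
        have e1 : m - 1 + 1 = m := by omega
        have e2 : m - 1 + 2 = m + 1 := by omega
        have hd : a (m - 1 + 1) < a (m - 1) := hdn_before (m-1) (by omega)
        have hu : a (m - 1 + 1) < a (m - 1 + 2) := by
          rw [e1, e2]; exact hup_after m le_rfl (by omega)
        have hv := hFMIN (m - 1) (by omega) hd hu
        simp only [e1] at hv
        rw [hv]
      · -- take is decreasing
        right
        rw [List.pairwise_iff_getElem]
        intro i j hi hj hij
        simp only [List.length_take] at hi hj
        have hi' : i < P.length := by omega
        have hj' : j < P.length := by omega
        rw [List.getElem_take, List.getElem_take]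
        rw [← haeq i hi', ← haeq j hj']
        exact step_anti (f := a) (n := m + 1)
          (fun k hk => hdn_before k (by omega)) i j (by omega) hij
      · -- drop is increasing
        left
        rw [List.pairwise_iff_getElem]
        intro i j hi hj hij
        simp only [List.length_drop] at hi hj
        rw [List.getElem_drop, List.getElem_drop]
        rw [← haeq (m + i) (by omega), ← haeq (m + j) (by omega)]
        refine step_mono (f := fun t => a (m + t)) (n := P.length - m)
          (fun k hk => hup_after (m + k) (by omega) (by omega)) i j (by omega) hij
  · -- all decreasing
    push_neg at hex
    left; right
    rw [List.pairwise_iff_getElem]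
    intro i j hi hj hij
    rw [← haeq i hi, ← haeq j hj]
    refine step_anti (f := a) (n := P.length) (fun k hk => ?_) i j hj hij
    have h1 := hex k hk
    have h2 := hFD k (k+1) (by omega) (by omega) (by omega)
    omega

end PartA
-- ===== Section 9: Part B =====
section PartB
variable {V : Type*}

theorem maxFlat_reverse {G : SimpleGraph V} {Q : List V} (hQ : IsMaxFlatPath G Q) :
    IsMaxFlatPath G Q.reverse := by
  obtain ⟨⟨⟨hnd, hadj⟩, hflat⟩, hmax⟩ := hQ
  have hlen : Q.reverse.length = Q.length := List.length_reverse
  refine ⟨⟨⟨List.nodup_reverse.2 hnd, ?_⟩, ?_⟩, ?_⟩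
  · intro i j
    have hi : (i : ℕ) < Q.length := by have := i.2; omega
    have hj : (j : ℕ) < Q.length := by have := j.2; omega
    have e1 : Q.reverse.get i = Q[Q.length - 1 - (i : ℕ)]'(by omega) := by
      simp only [List.get_eq_getElem, List.getElem_reverse]
    have e2 : Q.reverse.get j = Q[Q.length - 1 - (j : ℕ)]'(by omega) := by
      simp only [List.get_eq_getElem, List.getElem_reverse]
    rw [e1, e2]
    have := hadj ⟨Q.length - 1 - (i : ℕ), by omega⟩ ⟨Q.length - 1 - (j : ℕ), by omega⟩
    simp only [List.get_eq_getElem] at this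
    rw [this]
    constructor
    · rintro (h | h)
      · right; omega
      · left; omega
    · rintro (h | h)
      · right; omega
      · left; omega
  · intro i h1 h2
    have hi : (i : ℕ) < Q.length := by have := i.2; omega
    have e1 : Q.reverse.get i = Q[Q.length - 1 - (i : ℕ)]'(by omega) := by
      simp only [List.get_eq_getElem, List.getElem_reverse]
    rw [e1]
    have := hflat ⟨Q.length - 1 - (i : ℕ), by omega⟩ (by simp; omega) (by simp; omega)
    simpa using this
  · intro h
    have hne : Q ≠ [] := by
      intro he; rw [he] at h; simp at h
    have hlp : 0 < Q.length := List.length_pos_iff.2 hne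
    have hrevlen : 0 < Q.reverse.length := by omega
    obtain ⟨hh, hl⟩ := hmax hne
    constructor
    · rw [List.head_reverse]; exact hl
    · rw [List.getLast_reverse]; exact hh

theorem align_step [Fintype V] {G : SimpleGraph V} {P Q : List V}
    (hP : IsMaxFlatPath G P) (hQ : IsMaxFlatPath G Q) {i j : ℕ}
    (hi : i + 2 < P.length) (hj : j + 1 < Q.length)
    (h0 : P[i]'(by omega) = Q[j]'(by omega))
    (h1 : P[i+1]'(by omega) = Q[j+1]'hj) :
    ∃ h2 : j + 2 < Q.length, P[i+2]'hi = Q[j+2]'h2 := by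
  have hPnd := hP.1.1.1
  have hQnd := hQ.1.1.1
  have hPstep : ∀ k (h : k + 1 < P.length), G.Adj (P[k]'(by omega)) (P[k+1]'h) :=
    fun k h => (hP.1.1.2 ⟨k, by omega⟩ ⟨k + 1, h⟩).2 (Or.inl rfl)
  have hQstep : ∀ k (h : k + 1 < Q.length), G.Adj (Q[k]'(by omega)) (Q[k+1]'h) :=
    fun k h => (hQ.1.1.2 ⟨k, by omega⟩ ⟨k + 1, h⟩).2 (Or.inl rfl)
  -- the middle vertex is internal in P, so has degree 2
  have hdeg : (G.neighborSet (P[i+1]'(by omega))).ncard = 2 :=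
    hP.1.2 ⟨i + 1, by omega⟩ (Nat.succ_pos i) (by exact hi)
  have hQne : Q ≠ [] := by
    intro he; rw [he] at hj; simp at hj
  have hj2 : j + 2 < Q.length := by
    by_contra hcon
    have hjlast : j + 1 = Q.length - 1 := by omega
    have : Q.getLast hQne = Q[j+1]'hj := by
      rw [List.getLast_eq_getElem hQne]
      congr 1
      omega
    have hend := (hQ.2 hQne).2
    rw [this, ← h1] at hend
    exact hend hdeg
  have hNP : G.neighborSet (P[i+1]'(by omega)) = {P[i]'(by omega), P[i+2]'hi} := by
    refine neighborSet_pair hdeg ?_ ?_ ?_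
    · exact (hPstep i (by omega)).symm
    · exact hPstep (i+1) (by omega)
    · rw [ne_eq, List.Nodup.getElem_inj_iff hPnd]; omega
  have hNQ : G.neighborSet (Q[j+1]'hj) = {Q[j]'(by omega), Q[j+2]'hj2} := by
    refine neighborSet_pair (h1 ▸ hdeg) ?_ ?_ ?_
    · exact (hQstep j (by omega)).symm
    · exact hQstep (j+1) (by omega)
    · rw [ne_eq, List.Nodup.getElem_inj_iff hQnd]; omega
  rw [h1, hNQ] at hNP
  have hmem : P[i+2]'hi ∈ ({Q[j]'(by omega), Q[j+2]'hj2} : Set V) := by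
    rw [hNP]
    right; rfl
  refine ⟨hj2, ?_⟩
  rcases hmem with h | h
  · exfalso
    rw [← h0] at h
    have : i = i + 2 := (List.Nodup.getElem_inj_iff hPnd).1 h.symm
    omega
  · rw [Set.mem_singleton_iff] at h; exact h

theorem align_end [Fintype V] {G : SimpleGraph V} {P Q : List V}
    (hP : IsMaxFlatPath G P) (hQ : IsMaxFlatPath G Q) {i j : ℕ}
    (hi : i + 2 = P.length) (hj : j + 1 < Q.length)
    (h1 : P[i+1]'(by omega) = Q[j+1]'hj) : j + 2 = Q.length := by
  by_contra hcon
  have hj2 : j + 2 < Q.length := by omega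
  have hdeg : (G.neighborSet (Q[j+1]'hj)).ncard = 2 :=
    hQ.1.2 ⟨j + 1, by omega⟩ (Nat.succ_pos j) (by exact hj2)
  have hPne : P ≠ [] := by
    intro he; rw [he] at hi; simp at hi
  have hlast : P.getLast hPne = P[i+1]'(by omega) := by
    rw [List.getLast_eq_getElem hPne]
    congr 1
    omega
  have hend := (hP.2 hPne).2
  rw [hlast, h1] at hend
  exact hend hdeg

theorem align_fwd [Fintype V] {G : SimpleGraph V} {P Q : List V}
    (hP : IsMaxFlatPath G P) (hQ : IsMaxFlatPath G Q) {i j : ℕ}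
    (hi1 : i + 1 < P.length) (hj1 : j + 1 < Q.length)
    (h0 : P[i]'(by omega) = Q[j]'(by omega))
    (h1 : P[i+1]'hi1 = Q[j+1]'hj1) :
    ∀ t (ht : i + 1 + t < P.length),
      ∃ hq : j + 1 + t < Q.length,
        (P[i+t]'(by omega) = Q[j+t]'(by omega)) ∧
        (P[i+1+t]'ht = Q[j+1+t]'hq) := by
  intro t
  induction t with
  | zero => intro ht; exact ⟨hj1, h0, h1⟩
  | succ k ih =>
    intro ht
    obtain ⟨hq, e0, e1⟩ := ih (by omega)
    have hstep := align_step hP hQ (i := i + k) (j := j + k)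
      (by omega) (by omega) (by convert e0 using 2) (by convert e1 using 2 <;> omega)
    obtain ⟨hq2, e2⟩ := hstep
    refine ⟨by omega, by convert e1 using 2 <;> omega, by convert e2 using 2 <;> omega⟩

theorem align_len [Fintype V] {G : SimpleGraph V} {P Q : List V}
    (hP : IsMaxFlatPath G P) (hQ : IsMaxFlatPath G Q) {i j : ℕ}
    (hi1 : i + 1 < P.length) (hj1 : j + 1 < Q.length)
    (h0 : P[i]'(by omega) = Q[j]'(by omega))
    (h1 : P[i+1]'hi1 = Q[j+1]'hj1) : P.length - i = Q.length - j := by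
  set T := P.length - 2 - i with hT
  obtain ⟨hq, e0, e1⟩ := align_fwd hP hQ hi1 hj1 h0 h1 T (by omega)
  have hend := align_end hP hQ (i := i + T) (j := j + T) (by omega) (by omega)
    (by convert e1 using 2 <;> omega)
  omega

theorem align_full [Fintype V] {G : SimpleGraph V} {P Q : List V}
    (hP : IsMaxFlatPath G P) (hQ : IsMaxFlatPath G Q) {i j : ℕ}
    (hi1 : i + 1 < P.length) (hj1 : j + 1 < Q.length) (hi0 : 0 < i) (hj0 : 0 < j)
    (h0 : P[i]'(by omega) = Q[j]'(by omega))
    (h1 : P[i+1]'hi1 = Q[j+1]'hj1) : P = Q := by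
  have hPrev := maxFlat_reverse hP
  have hQrev := maxFlat_reverse hQ
  have hlPr : P.reverse.length = P.length := List.length_reverse
  have hlQr : Q.reverse.length = Q.length := List.length_reverse
  -- backward: reversed alignment
  have hrev0 : P.reverse[P.length - 2 - i]'(by omega) = Q.reverse[Q.length - 2 - j]'(by omega) := by
    rw [List.getElem_reverse, List.getElem_reverse]
    have eP : P.length - 1 - (P.length - 2 - i) = i + 1 := by omega
    have eQ : Q.length - 1 - (Q.length - 2 - j) = j + 1 := by omega
    convert h1 using 2 <;> omega
  have hrev1 : P.reverse[(P.length - 2 - i) + 1]'(by omega) =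
      Q.reverse[(Q.length - 2 - j) + 1]'(by omega) := by
    rw [List.getElem_reverse, List.getElem_reverse]
    convert h0 using 2 <;> omega
  have hlen1 : P.length - i = Q.length - j := align_len hP hQ hi1 hj1 h0 h1
  have hlen2 : P.reverse.length - (P.length - 2 - i) =
      Q.reverse.length - (Q.length - 2 - j) :=
    align_len hPrev hQrev (i := P.length - 2 - i) (j := Q.length - 2 - j)
      (by omega) (by omega) hrev0 hrev1
  have hij : i = j := by omega
  have hlen : P.length = Q.length := by omega
  subst hij
  -- all entries equal
  refine List.ext_getElem hlen ?_
  intro k hk1 hk2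
  rcases Nat.lt_or_ge k i with hki | hki
  · -- use reversed alignment
    have hbound : (P.length - 2 - i) + 1 + (i - k) < P.reverse.length := by
      rw [hlPr]; omega
    have hb1 : (P.length - 2 - i) + 1 < P.reverse.length := by rw [hlPr]; omega
    have hb2 : (Q.length - 2 - i) + 1 < Q.reverse.length := by rw [hlQr]; omega
    obtain ⟨hq, e0, e1⟩ := align_fwd hPrev hQrev (i := P.length - 2 - i)
      (j := Q.length - 2 - i) hb1 hb2 hrev0 hrev1 (i - k) hbound
    have : P.reverse[(P.length - 2 - i) + 1 + (i - k)]'hbound =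
        Q.reverse[(Q.length - 2 - i) + 1 + (i - k)]'hq := e1
    rw [List.getElem_reverse, List.getElem_reverse] at this
    have eP : P.length - 1 - ((P.length - 2 - i) + 1 + (i - k)) = k := by omega
    have eQ : Q.length - 1 - ((Q.length - 2 - i) + 1 + (i - k)) = k := by omega
    convert this using 2 <;> omega
  · rcases Nat.eq_or_lt_of_le hki with rfl | hki'
    · exact h0
    · have hbound : i + 1 + (k - i - 1) < P.length := by omega
      obtain ⟨hq, e0, e1⟩ := align_fwd hP hQ hi1 hj1 h0 h1 (k - i - 1) hbound
      have : P[i + 1 + (k - i - 1)]'hbound = Q[i + 1 + (k - i - 1)]'hq := e1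
      convert this using 2 <;> omega

end PartB
set_option maxHeartbeats 1000000 in
theorem stmt13 {V : Type*} [Fintype V] (G : SimpleGraph V) (l : List V)
    (hmin : MinimallyBad G) (hbad : BadOrder G l)
    (v1 : V) (hv1 : l.head? = some v1) :
    (∀ P : List V, IsFlatPath G P →
      (WellOrderedPath l P ∨
        ∃ m, 0 < m ∧ m + 1 < P.length ∧ P[m]? = some v1 ∧
          WellOrderedPath l (P.take (m + 1)) ∧ WellOrderedPath l (P.drop m))) ∧
    (∀ P Q : List V, IsMaxFlatPath G P → IsMaxFlatPath G Q →
      ¬ WellOrderedPath l P → ¬ WellOrderedPath l Q → P = Q ∨ P = Q.reverse) := by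
  constructor
  · intro P hP
    exact partA hmin hbad hv1 P hP
  · intro P Q hPm hQm hnP hnQ
    classical
    rcases partA hmin hbad hv1 P hPm.1 with h | ⟨mP, hmP0, hmP1, hPv, -, -⟩
    · exact absurd h hnP
    rcases partA hmin hbad hv1 Q hQm.1 with h | ⟨mQ, hmQ0, hmQ1, hQv, -, -⟩
    · exact absurd h hnQ
    obtain ⟨iP, rfl⟩ : ∃ k, mP = k + 1 := ⟨mP - 1, by omega⟩
    obtain ⟨iQ, rfl⟩ : ∃ k, mQ = k + 1 := ⟨mQ - 1, by omega⟩
    have hPv1 : P[iP+1]'(by omega) = v1 := by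
      rw [List.getElem?_eq_getElem (by omega : iP + 1 < P.length)] at hPv
      exact Option.some.inj hPv
    have hQv1 : Q[iQ+1]'(by omega) = v1 := by
      rw [List.getElem?_eq_getElem (by omega : iQ + 1 < Q.length)] at hQv
      exact Option.some.inj hQv
    have hPnd := hPm.1.1.1
    have hQnd := hQm.1.1.1
    have hPstep : ∀ k (h : k + 1 < P.length), G.Adj (P[k]'(by omega)) (P[k+1]'h) :=
      fun k h => (hPm.1.1.2 ⟨k, by omega⟩ ⟨k + 1, h⟩).2 (Or.inl rfl)
    have hQstep : ∀ k (h : k + 1 < Q.length), G.Adj (Q[k]'(by omega)) (Q[k+1]'h) :=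
      fun k h => (hQm.1.1.2 ⟨k, by omega⟩ ⟨k + 1, h⟩).2 (Or.inl rfl)
    have hdegP : (G.neighborSet (P[iP+1]'(by omega))).ncard = 2 :=
      hPm.1.2 ⟨iP + 1, by omega⟩ (Nat.succ_pos iP) (by exact hmP1)
    have hdegQ : (G.neighborSet (Q[iQ+1]'(by omega))).ncard = 2 :=
      hQm.1.2 ⟨iQ + 1, by omega⟩ (Nat.succ_pos iQ) (by exact hmQ1)
    have hNP : G.neighborSet (P[iP+1]'(by omega)) =
        {P[iP]'(by omega), P[iP+2]'(by omega)} := by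
      refine neighborSet_pair hdegP ?_ ?_ ?_
      · exact (hPstep iP (by omega)).symm
      · exact hPstep (iP+1) (by omega)
      · rw [ne_eq, List.Nodup.getElem_inj_iff hPnd]; omega
    have hNQ : G.neighborSet (Q[iQ+1]'(by omega)) =
        {Q[iQ]'(by omega), Q[iQ+2]'(by omega)} := by
      refine neighborSet_pair hdegQ ?_ ?_ ?_
      · exact (hQstep iQ (by omega)).symm
      · exact hQstep (iQ+1) (by omega)
      · rw [ne_eq, List.Nodup.getElem_inj_iff hQnd]; omega
    have hkey : ({P[iP]'(by omega), P[iP+2]'(by omega)} : Set V) =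
        {Q[iQ]'(by omega), Q[iQ+2]'(by omega)} := by
      rw [← hNP, ← hNQ]
      rw [hPv1, hQv1]
    have hmem : P[iP+2]'(by omega) ∈
        ({Q[iQ]'(by omega), Q[iQ+2]'(by omega)} : Set V) := by
      rw [← hkey]; right; rfl
    rcases hmem with hcase | hcase
    · -- crossed : P = Q.reverse
      right
      have hQrev := maxFlat_reverse hQm
      have hlQr : Q.reverse.length = Q.length := List.length_reverse
      have hj1 : (Q.length - 2 - iQ) + 1 < Q.reverse.length := by rw [hlQr]; omega
      have h0 : P[iP+1]'(by omega) = Q.reverse[Q.length - 2 - iQ]'(by omega) := by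
        rw [List.getElem_reverse]
        rw [hPv1, ← hQv1]
        congr 1
        omega
      have h1 : P[iP+2]'(by omega) = Q.reverse[(Q.length - 2 - iQ) + 1]'hj1 := by
        rw [List.getElem_reverse]
        rw [hcase]
        congr 1
        omega
      exact align_full hPm hQrev (i := iP + 1) (j := Q.length - 2 - iQ)
        (by omega) hj1 (by omega) (by omega) h0 h1
    · -- aligned : P = Q
      left
      rw [Set.mem_singleton_iff] at hcase
      have h0 : P[iP+1]'(by omega) = Q[iQ+1]'(by omega) := by rw [hPv1, hQv1]
      exact align_full hPm hQm (i := iP + 1) (j := iQ + 1)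
        (by omega) (by omega) (by omega) (by omega) h0 hcase
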